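/- arXiv:2103.13878 — 2 statements merged into one kernel-verified Lean document; each statement's English description precedes it below -/
import Mathlib

section
/- Let E = EuclideanSpace ℝ (Fin 3), let μ be a measure on E, let u : E → ℝ be twice continuously differentiable (ContDiff ℝ 2), let n : E → E be differentiable with ‖n y‖ = 1 for every y ∈ E, let g : E → ℝ, and let H ≥ 0 be a real number with |trace(fderiv ℝ n x)| ≤ 2H for μ-a.e. x. Set ψ(y) := ⟪n y, ∇u(y)⟫, Δu(x) := trace(fderiv ℝ (fun y => ∇u y) x), Q(x) := ⟪(fderiv ℝ (fun y => ∇u y) x)(n x), n x⟫, and Δ_Γu(x) := trace(fderiv ℝ (fun y => ∇u(y) - ψ(y) • n y) x) - ⟪fderiv ℝ (fun y => ∇u(y) - ψ(y) • n y) x (n x), n x⟫. Assume the functions x ↦ Δ_Γu(x) - g x, x ↦ Δu(x) - g x, ψ, and Q are a.e. strongly measurable with respect to μ. Then eLpNorm (fun x => Δ_Γu(x) - g x) 2 μ ≤ ENNReal.ofReal (max 1 (2*H)) * ( eLpNorm (fun x => Δu(x) - g x) 2 μ + eLpNorm ψ 2 μ + eLpNorm Q 2 μ ). -/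
open MeasureTheory

open scoped NNReal ENNReal

noncomputable section Aux

local notation "E" => EuclideanSpace ℝ (Fin 3)

lemma trace_smulRight' (L : E →L[ℝ] ℝ) (c : E) :
    LinearMap.trace ℝ E (L.smulRight c).toLinearMap = L c := by
  have h : (L.smulRight c).toLinearMap =
      (LinearMap.toSpanSingleton ℝ E c) ∘ₗ L.toLinearMap := by
    ext v; simp [LinearMap.toSpanSingleton]
  rw [h, LinearMap.trace_comp_comm']
  have h2 : L.toLinearMap ∘ₗ LinearMap.toSpanSingleton ℝ E c
      = (L c) • LinearMap.id := by
    ext r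
    simp [LinearMap.toSpanSingleton, mul_comm]
  rw [h2, _root_.map_smul, LinearMap.trace_id]
  simp

lemma pointwise_key (u : E → ℝ) (hu : ContDiff ℝ 2 u) (n : E → E)
    (hn_diff : Differentiable ℝ n) (hn_norm : ∀ y, ‖n y‖ = 1) (x : E) :
    LinearMap.trace ℝ E
        (fderiv ℝ (fun y => gradient u y - (inner ℝ (n y) (gradient u y) : ℝ) • n y) x).toLinearMap
      - (inner ℝ (fderiv ℝ (fun y => gradient u y - (inner ℝ (n y) (gradient u y) : ℝ) • n y) x (n x))
          (n x) : ℝ)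
    = (LinearMap.trace ℝ E (fderiv ℝ (fun y => gradient u y) x).toLinearMap)
      - (inner ℝ (n x) (gradient u x) : ℝ) *
          LinearMap.trace ℝ E (fderiv ℝ n x).toLinearMap
      - (inner ℝ (fderiv ℝ (fun y => gradient u y) x (n x)) (n x) : ℝ) := by
  have hfd : ContDiff ℝ 1 (fderiv ℝ u) := hu.fderiv_right (by norm_num)
  have hG : Differentiable ℝ (fun y => gradient u y) := by
    have : Differentiable ℝ (fun y => (InnerProductSpace.toDual ℝ E).symm (fderiv ℝ u y)) :=
      (InnerProductSpace.toDual ℝ E).symm.differentiable.comp (hfd.differentiable (by norm_num))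
    exact this
  have hψ : Differentiable ℝ (fun y => (inner ℝ (n y) (gradient u y) : ℝ)) :=
    Differentiable.inner (𝕜 := ℝ) hn_diff hG
  have hψn : DifferentiableAt ℝ (fun y => (inner ℝ (n y) (gradient u y) : ℝ) • n y) x :=
    ((hψ x).smul (hn_diff x))
  have hsub : fderiv ℝ (fun y => gradient u y - (inner ℝ (n y) (gradient u y) : ℝ) • n y) x
      = fderiv ℝ (fun y => gradient u y) x
        - fderiv ℝ (fun y => (inner ℝ (n y) (gradient u y) : ℝ) • n y) x :=
    fderiv_fun_sub (hG x) hψn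
  have hsm : fderiv ℝ (fun y => (inner ℝ (n y) (gradient u y) : ℝ) • n y) x
      = (inner ℝ (n x) (gradient u x) : ℝ) • fderiv ℝ n x
        + (fderiv ℝ (fun y => (inner ℝ (n y) (gradient u y) : ℝ)) x).smulRight (n x) :=
    fderiv_fun_smul (hψ x) (hn_diff x)
  have hnn : (inner ℝ (n x) (n x) : ℝ) = 1 := by
    rw [real_inner_self_eq_norm_sq, hn_norm]; norm_num
  have horth : ∀ v : E, (inner ℝ (fderiv ℝ n x v) (n x) : ℝ) = 0 := by
    intro v
    have hconst : (fun y => (inner ℝ (n y) (n y) : ℝ)) = fun _ => (1 : ℝ) := by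
      funext y
      rw [real_inner_self_eq_norm_sq, hn_norm]; norm_num
    have h0 : fderiv ℝ (fun y => (inner ℝ (n y) (n y) : ℝ)) x v = 0 := by
      rw [hconst, fderiv_fun_const]; simp
    rw [fderiv_inner_apply (𝕜 := ℝ) (hn_diff x) (hn_diff x) v] at h0
    have := h0
    rw [real_inner_comm (n x)] at this
    linarith
  set ψ' := fderiv ℝ (fun y => (inner ℝ (n y) (gradient u y) : ℝ)) x
  have htr : LinearMap.trace ℝ E
      (fderiv ℝ (fun y => gradient u y - (inner ℝ (n y) (gradient u y) : ℝ) • n y) x).toLinearMap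
      = LinearMap.trace ℝ E (fderiv ℝ (fun y => gradient u y) x).toLinearMap
        - ((inner ℝ (n x) (gradient u x) : ℝ) *
            LinearMap.trace ℝ E (fderiv ℝ n x).toLinearMap
          + ψ' (n x)) := by
    rw [hsub, hsm, ← trace_smulRight' ψ' (n x)]
    push_cast
    simp [map_sub, map_add, _root_.map_smul, smul_eq_mul]
  have hin : (inner ℝ (fderiv ℝ (fun y => gradient u y
        - (inner ℝ (n y) (gradient u y) : ℝ) • n y) x (n x)) (n x) : ℝ)
      = (inner ℝ (fderiv ℝ (fun y => gradient u y) x (n x)) (n x) : ℝ) - ψ' (n x) := by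
    rw [hsub, hsm]
    simp only [ContinuousLinearMap.coe_sub', Pi.sub_apply, ContinuousLinearMap.add_apply,
      ContinuousLinearMap.coe_smul', Pi.smul_apply, ContinuousLinearMap.smulRight_apply,
      inner_sub_left, inner_add_left, real_inner_smul_left, horth, hnn]
    ring
  rw [htr, hin]
  ring

end Aux



/-- Estimate (3) of Theorem 2.1 in L² form:
`‖Δ_Γu - g‖ ≤ C(‖Δū - ḡ‖ + ‖⟪n, ∇ū⟫‖ + ‖nᵀ∇²ū n‖)` with `C = max(1, 2|H|)`. -/
theorem surface_laplacian_estimate_L2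
    (μ : Measure (EuclideanSpace ℝ (Fin 3)))
    (u : EuclideanSpace ℝ (Fin 3) → ℝ)
    (hu : ContDiff ℝ 2 u)
    (n : EuclideanSpace ℝ (Fin 3) → EuclideanSpace ℝ (Fin 3))
    (hn_diff : Differentiable ℝ n)
    (hn_norm : ∀ y, ‖n y‖ = 1)
    (g : EuclideanSpace ℝ (Fin 3) → ℝ)
    (H : ℝ) (hH : 0 ≤ H)
    (hHbound : ∀ᵐ x ∂μ,
      |LinearMap.trace ℝ (EuclideanSpace ℝ (Fin 3)) (fderiv ℝ n x).toLinearMap| ≤ 2 * H)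
    (h1 : AEStronglyMeasurable (fun x =>
      LinearMap.trace ℝ (EuclideanSpace ℝ (Fin 3))
        (fderiv ℝ (fun y => gradient u y - (inner ℝ (n y) (gradient u y) : ℝ) • n y) x).toLinearMap
      - (inner ℝ (fderiv ℝ (fun y => gradient u y - (inner ℝ (n y) (gradient u y) : ℝ) • n y) x (n x))
          (n x) : ℝ)
      - g x) μ)
    (h2 : AEStronglyMeasurable (fun x =>
      LinearMap.trace ℝ (EuclideanSpace ℝ (Fin 3))
        (fderiv ℝ (fun y => gradient u y) x).toLinearMap - g x) μ)
    (h3 : AEStronglyMeasurable (fun x => (inner ℝ (n x) (gradient u x) : ℝ)) μ)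
    (h4 : AEStronglyMeasurable
      (fun x => (inner ℝ (fderiv ℝ (fun y => gradient u y) x (n x)) (n x) : ℝ)) μ) :
    eLpNorm (fun x =>
      LinearMap.trace ℝ (EuclideanSpace ℝ (Fin 3))
        (fderiv ℝ (fun y => gradient u y - (inner ℝ (n y) (gradient u y) : ℝ) • n y) x).toLinearMap
      - (inner ℝ (fderiv ℝ (fun y => gradient u y - (inner ℝ (n y) (gradient u y) : ℝ) • n y) x (n x))
          (n x) : ℝ)
      - g x) 2 μ ≤
    ENNReal.ofReal (max 1 (2 * H)) *
      (eLpNorm (fun x =>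
        LinearMap.trace ℝ (EuclideanSpace ℝ (Fin 3))
          (fderiv ℝ (fun y => gradient u y) x).toLinearMap - g x) 2 μ
      + eLpNorm (fun x => (inner ℝ (n x) (gradient u x) : ℝ)) 2 μ
      + eLpNorm (fun x => (inner ℝ (fderiv ℝ (fun y => gradient u y) x (n x)) (n x) : ℝ)) 2 μ) := by

  classical
  set ψ := fun x => (inner ℝ (n x) (gradient u x) : ℝ) with hψdef
  set t := fun x => LinearMap.trace ℝ (EuclideanSpace ℝ (Fin 3)) (fderiv ℝ n x).toLinearMap
    with htdef
  set Q := fun x => (inner ℝ (fderiv ℝ (fun y => gradient u y) x (n x)) (n x) : ℝ) with hQdef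
  set f1 := fun x => LinearMap.trace ℝ (EuclideanSpace ℝ (Fin 3))
      (fderiv ℝ (fun y => gradient u y) x).toLinearMap - g x with hf1def
  have hkey : ∀ x, (LinearMap.trace ℝ (EuclideanSpace ℝ (Fin 3))
      (fderiv ℝ (fun y => gradient u y - (inner ℝ (n y) (gradient u y) : ℝ) • n y) x).toLinearMap
      - (inner ℝ (fderiv ℝ (fun y => gradient u y - (inner ℝ (n y) (gradient u y) : ℝ) • n y) x (n x))
          (n x) : ℝ)
      - g x) = (f1 x - ψ x * t x) - Q x := by
    intro x
    have := pointwise_key u hu n hn_diff hn_norm x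
    simp only [hf1def, hψdef, htdef, hQdef]
    rw [sub_right_comm] at this
    rw [this]
    ring
  have hfun : (fun x => LinearMap.trace ℝ (EuclideanSpace ℝ (Fin 3))
      (fderiv ℝ (fun y => gradient u y - (inner ℝ (n y) (gradient u y) : ℝ) • n y) x).toLinearMap
      - (inner ℝ (fderiv ℝ (fun y => gradient u y - (inner ℝ (n y) (gradient u y) : ℝ) • n y) x (n x))
          (n x) : ℝ)
      - g x) = fun x => (f1 x - ψ x * t x) - Q x := funext hkey
  rw [hfun]
  have hm_f : AEStronglyMeasurable (fun x => (f1 x - ψ x * t x) - Q x) μ := by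
    rw [← hfun]; exact h1
  have hm_ψt : AEStronglyMeasurable (fun x => ψ x * t x) μ := by
    have : (fun x => ψ x * t x) = fun x => f1 x - ((f1 x - ψ x * t x - Q x) + Q x) := by
      funext x; ring
    rw [this]
    exact h2.sub (hm_f.add h4)
  have hm_sub : AEStronglyMeasurable (fun x => f1 x - ψ x * t x) μ := h2.sub hm_ψt
  have hp : (1 : ℝ≥0∞) ≤ 2 := one_le_two
  have step1 : eLpNorm (fun x => (f1 x - ψ x * t x) - Q x) 2 μ ≤
      eLpNorm (fun x => f1 x - ψ x * t x) 2 μ + eLpNorm Q 2 μ :=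
    eLpNorm_sub_le hm_sub h4 hp
  have step2 : eLpNorm (fun x => f1 x - ψ x * t x) 2 μ ≤
      eLpNorm f1 2 μ + eLpNorm (fun x => ψ x * t x) 2 μ :=
    eLpNorm_sub_le h2 hm_ψt hp
  have step3 : eLpNorm (fun x => ψ x * t x) 2 μ ≤
      (Real.toNNReal (2 * H)) • eLpNorm ψ 2 μ := by
    refine eLpNorm_le_nnreal_smul_eLpNorm_of_ae_le_mul ?_ 2
    filter_upwards [hHbound] with x hx
    have hb : ‖ψ x * t x‖ ≤ (Real.toNNReal (2 * H) : ℝ) * ‖ψ x‖ := by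
      rw [Real.norm_eq_abs, abs_mul, Real.coe_toNNReal _ (by positivity),
        Real.norm_eq_abs, mul_comm (|ψ x|)]
      exact mul_le_mul_of_nonneg_right hx (abs_nonneg _)
    exact_mod_cast hb
  set M : ℝ≥0∞ := ENNReal.ofReal (max 1 (2 * H)) with hMdef
  have hM1 : (1 : ℝ≥0∞) ≤ M := by
    rw [hMdef, ← ENNReal.ofReal_one]
    exact ENNReal.ofReal_le_ofReal (le_max_left _ _)
  have hM2 : ENNReal.ofReal (2 * H) ≤ M :=
    ENNReal.ofReal_le_ofReal (le_max_right _ _)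
  have hcoe : ((Real.toNNReal (2 * H) : ℝ≥0) : ℝ≥0∞) = ENNReal.ofReal (2 * H) := rfl
  calc eLpNorm (fun x => (f1 x - ψ x * t x) - Q x) 2 μ
      ≤ eLpNorm f1 2 μ + eLpNorm (fun x => ψ x * t x) 2 μ + eLpNorm Q 2 μ := by
        exact le_trans step1 (add_le_add_left step2 _)
    _ ≤ eLpNorm f1 2 μ + ENNReal.ofReal (2 * H) * eLpNorm ψ 2 μ + eLpNorm Q 2 μ := by
        refine add_le_add_left (add_le_add_right ?_ _) _
        rw [← hcoe]
        simpa [ENNReal.smul_def] using step3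
    _ ≤ M * eLpNorm f1 2 μ + M * eLpNorm ψ 2 μ + M * eLpNorm Q 2 μ := by
        refine add_le_add (add_le_add ?_ ?_) ?_
        · conv_lhs => rw [← one_mul (eLpNorm f1 2 μ)]
          exact mul_le_mul_left hM1 _
        · exact mul_le_mul_left hM2 _
        · conv_lhs => rw [← one_mul (eLpNorm Q 2 μ)]
          exact mul_le_mul_left hM1 _
    _ = M * (eLpNorm f1 2 μ + eLpNorm ψ 2 μ + eLpNorm Q 2 μ) := by ring
end

section
/- Let E = EuclideanSpace ℝ (Fin 3) and x ∈ E. Let φ : E → ℝ be twice continuously differentiable on a neighborhood of x with ∇φ(x) ≠ 0, and set n(y) := ‖∇φ(y)‖⁻¹ • ∇φ(y). Let v : E → E be differentiable at x and suppose ⟪v y, ∇φ(y)⟫ = 0 for all y in a neighborhood of x. Then trace(fderiv ℝ v x) - ⟪fderiv ℝ v x (n x), n x⟫ = ‖∇φ(x)‖⁻¹ * trace( fderiv ℝ (fun y => ‖∇φ(y)‖ • v y) x ). -/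
open Filter

lemma trace_smulRight_aux {E : Type*} [NormedAddCommGroup E] [InnerProductSpace ℝ E]
    [FiniteDimensional ℝ E] (f : E →L[ℝ] ℝ) (w : E) :
    LinearMap.trace ℝ E (f.smulRight w).toLinearMap = f w := by
  have h : (f.smulRight w).toLinearMap
      = dualTensorHom ℝ E E ((f : E →ₗ[ℝ] ℝ) ⊗ₜ[ℝ] w) := by
    ext u
    simp [dualTensorHom_apply]
  rw [h, LinearMap.trace_eq_contract_apply, contractLeft_apply]
  rfl

/-- Remark after Theorem 2.1: for a level-set surface `Γ = {φ = 0}` with unit normal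
`n = ∇φ/|∇φ|`, if `v·n = 0` near `x` then `∇_Γ·v = (1/|∇φ|) ∇·(|∇φ| v)`. -/
theorem surface_divergence_level_set
    (x : EuclideanSpace ℝ (Fin 3))
    (φ : EuclideanSpace ℝ (Fin 3) → ℝ)
    (hφ : ContDiffAt ℝ 2 φ x)
    (hφx : gradient φ x ≠ 0)
    (v : EuclideanSpace ℝ (Fin 3) → EuclideanSpace ℝ (Fin 3))
    (hv : DifferentiableAt ℝ v x)
    (hperp : ∀ᶠ y in nhds x, (inner ℝ (v y) (gradient φ y) : ℝ) = 0) :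
    LinearMap.trace ℝ (EuclideanSpace ℝ (Fin 3)) (fderiv ℝ v x).toLinearMap
      - (inner ℝ (fderiv ℝ v x (‖gradient φ x‖⁻¹ • gradient φ x))
          (‖gradient φ x‖⁻¹ • gradient φ x) : ℝ)
    = ‖gradient φ x‖⁻¹ *
        LinearMap.trace ℝ (EuclideanSpace ℝ (Fin 3))
          (fderiv ℝ (fun y => ‖gradient φ y‖ • v y) x).toLinearMap := by
  set g : EuclideanSpace ℝ (Fin 3) → EuclideanSpace ℝ (Fin 3) := gradient φ with hgdef
  have hgfun : g = fun y =>
      (InnerProductSpace.toDual ℝ (EuclideanSpace ℝ (Fin 3))).symm (fderiv ℝ φ y) := rfl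
  have hf' : ContDiffAt ℝ 1 (fderiv ℝ φ) x := hφ.fderiv_right (m := 1) le_rfl
  set H : EuclideanSpace ℝ (Fin 3) →L[ℝ] EuclideanSpace ℝ (Fin 3) →L[ℝ] ℝ :=
    fderiv ℝ (fderiv ℝ φ) x with hHdef
  have hH : HasFDerivAt (fderiv ℝ φ) H x := (hf'.differentiableAt one_ne_zero).hasFDerivAt
  set L : StrongDual ℝ (EuclideanSpace ℝ (Fin 3)) →L[ℝ] EuclideanSpace ℝ (Fin 3) :=
    (InnerProductSpace.toDual ℝ (EuclideanSpace ℝ (Fin 3))).symm.toContinuousLinearEquiv.toContinuousLinearMap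
    with hLdef
  set G : EuclideanSpace ℝ (Fin 3) →L[ℝ] EuclideanSpace ℝ (Fin 3) := L.comp H with hGdef
  have hg : HasFDerivAt g G x := by
    rw [hgfun]
    exact L.hasFDerivAt.comp x hH
  have hGinner : ∀ u w : EuclideanSpace ℝ (Fin 3), (inner ℝ (G u) w : ℝ) = H u w := by
    intro u w
    exact InnerProductSpace.toDual_symm_apply
  have hsymm : ∀ u w : EuclideanSpace ℝ (Fin 3), H u w = H w u := hφ.isSymmSndFDerivAt (by simp [minSmoothness_of_isRCLikeNormedField])
  set T : EuclideanSpace ℝ (Fin 3) →L[ℝ] EuclideanSpace ℝ (Fin 3) := fderiv ℝ v x with hTdef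
  set a : ℝ := ‖g x‖ with hadef
  have ha : a ≠ 0 := norm_ne_zero_iff.2 hφx
  have hkey : (inner ℝ (v x) (G (g x)) : ℝ) + inner ℝ (T (g x)) (g x) = 0 := by
    have h0 : fderiv ℝ (fun y => (inner ℝ (v y) (g y) : ℝ)) x = 0 := by
      have h0' : (fun y => (inner ℝ (v y) (g y) : ℝ)) =ᶠ[nhds x] (fun _ => (0 : ℝ)) := hperp
      rw [h0'.fderiv_eq]
      exact fderiv_const_apply 0
    have h1 := fderiv_inner_apply (𝕜 := ℝ) hv hg.differentiableAt (g x)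
    rw [h0] at h1
    simp only [ContinuousLinearMap.zero_apply] at h1
    rw [hg.fderiv] at h1
    exact h1.symm
  set D : EuclideanSpace ℝ (Fin 3) →L[ℝ] ℝ := a⁻¹ • ((innerSL ℝ (g x)).comp G) with hDdef
  have hnorm : HasFDerivAt (fun y => ‖g y‖) D x := by
    have h1 : HasFDerivAt (fun y => ‖g y‖ ^ 2) (2 • (innerSL ℝ (g x)).comp G) x := hg.norm_sq
    have h2 : HasFDerivAt (fun y => Real.sqrt (‖g y‖ ^ 2))
        ((1 / (2 * Real.sqrt (‖g x‖ ^ 2))) • (2 • (innerSL ℝ (g x)).comp G)) x :=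
      h1.sqrt (by positivity)
    have h3 : (fun y => Real.sqrt (‖g y‖ ^ 2)) = fun y => ‖g y‖ := by
      funext y; rw [Real.sqrt_sq (norm_nonneg _)]
    rw [h3] at h2
    convert h2 using 1
    rw [Real.sqrt_sq (norm_nonneg _), ← hadef, hDdef,
      ← Nat.cast_smul_eq_nsmul ℝ 2 ((innerSL ℝ (g x)).comp G), smul_smul]
    congr 1
    field_simp
    norm_num
  have hprod : fderiv ℝ (fun y => ‖g y‖ • v y) x = a • T + D.smulRight (v x) := by
    rw [fderiv_fun_smul hnorm.differentiableAt hv, hnorm.fderiv]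
  have htr : LinearMap.trace ℝ (EuclideanSpace ℝ (Fin 3))
        (fderiv ℝ (fun y => ‖g y‖ • v y) x).toLinearMap
      = a * LinearMap.trace ℝ (EuclideanSpace ℝ (Fin 3)) T.toLinearMap + D (v x) := by
    rw [hprod]
    have h4 : (a • T + D.smulRight (v x)).toLinearMap
        = a • T.toLinearMap + (D.smulRight (v x)).toLinearMap := rfl
    rw [h4, map_add, map_smul, trace_smulRight_aux]
    simp
  rw [htr]
  have hDv : D (v x) = a⁻¹ * (inner ℝ (v x) (G (g x)) : ℝ) := by
    rw [hDdef]
    simp only [ContinuousLinearMap.smul_apply, ContinuousLinearMap.comp_apply, innerSL_apply_apply,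
      smul_eq_mul]
    congr 1
    rw [real_inner_comm, hGinner, hsymm, ← hGinner, real_inner_comm]
  have hTN : (inner ℝ (T (a⁻¹ • g x)) (a⁻¹ • g x) : ℝ)
      = a⁻¹ * a⁻¹ * inner ℝ (T (g x)) (g x) := by
    rw [map_smul, real_inner_smul_left, real_inner_smul_right]
    ring
  rw [hTN, hDv]
  have h2 : (inner ℝ (T (g x)) (g x) : ℝ) = - inner ℝ (v x) (G (g x)) := by linarith
  rw [h2]
  field_simp
  ring
end
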